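/- For every odd n ≥ 3, there exists a non-extensible cube packing of the continuous torus ℝ^n/2ℤ^n consisting of exactly n + 1 pairwise disjoint unit cubes: i.e., n + 1 pairwise disjoint cubes such that every unit cube of the torus overlaps one of them. Such packings arise from one-factorizations of the complete graph K_{n+1}: given a one-factorization F_1, ..., F_n of K_{n+1} on vertex set {1, ..., n+1} and generic reals 0 < α_1, ..., α_n < 1, the cubes with centers t^j (j = 1, ..., n+1) defined by t^j_i = α_i if j is in a fixed side of the perfect matching F_i and t^j_i = α_i + 1 otherwise, are pairwise disjoint, and for suitable choices the packing is non-extensible. -/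
import Mathlib


/-- The unit cube `t + [0,1)^n` in the continuous torus `(ℝ/2ℤ)^n`. -/
def cubeC {n : ℕ} (t : Fin n → AddCircle (2 : ℝ)) : Set (Fin n → AddCircle (2 : ℝ)) :=
  {x | ∀ i, ∃ r : ℝ, 0 ≤ r ∧ r < 1 ∧ x i = t i + (r : AddCircle (2 : ℝ))}

namespace CubePack
set_option linter.unusedSectionVars false

/-! ### Generic facts about `AddCircle 2` and unit cubes -/

lemma coe_eq_coe_iff' {x y : ℝ} :
    ((x : AddCircle (2:ℝ)) = (y : AddCircle (2:ℝ))) ↔ ∃ k : ℤ, k • (2:ℝ) = x - y := by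
  rw [show ((x : AddCircle (2:ℝ)) = y) ↔ x - y ∈ AddSubgroup.zmultiples (2:ℝ) from
    QuotientAddGroup.eq_iff_sub_mem, AddSubgroup.mem_zmultiples_iff]

/-- If `x, y ∈ (0,2)` have the same image in `ℝ/2ℤ`, they are equal. -/
lemma coe_inj_Ioo {x y : ℝ} (hx0 : 0 < x) (hx2 : x < 2) (hy0 : 0 < y) (hy2 : y < 2)
    (h : (x : AddCircle (2:ℝ)) = (y : AddCircle (2:ℝ))) : x = y := by
  obtain ⟨k, hk⟩ := coe_eq_coe_iff'.mp h
  rw [zsmul_eq_mul] at hk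
  have hk1 : (-1:ℤ) < k := by
    have : (-1:ℝ) < (k:ℝ) := by nlinarith
    exact_mod_cast this
  have hk2 : k < 1 := by
    have : (k:ℝ) < 1 := by nlinarith
    exact_mod_cast this
  have hk0 : k = 0 := by omega
  rw [hk0] at hk
  push_cast at hk
  linarith

/-- Two unit cubes whose centers differ by exactly `1` in some coordinate are disjoint. -/
lemma cube_disjoint {n : ℕ} {u v : Fin n → AddCircle (2:ℝ)}
    (h : ∃ i, u i = v i + ((1:ℝ) : AddCircle (2:ℝ))) :
    Disjoint (cubeC u) (cubeC v) := by
  obtain ⟨i, hi⟩ := h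
  rw [Set.disjoint_left]
  intro x hxu hxv
  obtain ⟨r, hr0, hr1, hru⟩ := hxu i
  obtain ⟨r', hr0', hr1', hrv⟩ := hxv i
  rw [hi, add_assoc, ← AddCircle.coe_add] at hru
  have h2 : ((1 + r : ℝ) : AddCircle (2:ℝ)) = ((r' : ℝ) : AddCircle (2:ℝ)) :=
    add_left_cancel (hru.symm.trans hrv)
  obtain ⟨k, hk⟩ := coe_eq_coe_iff'.mp h2
  rw [zsmul_eq_mul] at hk
  have hk0 : (0:ℤ) < k := by
    have : (0:ℝ) < (k:ℝ) := by nlinarith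
    exact_mod_cast this
  have hk1 : (k:ℤ) < 1 := by
    have : (k:ℝ) < 1 := by nlinarith
    exact_mod_cast this
  omega

/-- Two unit cubes whose centers never differ by exactly `1` intersect. -/
lemma cube_intersect {n : ℕ} {u v : Fin n → AddCircle (2:ℝ)}
    (h : ∀ i, u i ≠ v i + ((1:ℝ) : AddCircle (2:ℝ))) :
    ¬ Disjoint (cubeC u) (cubeC v) := by
  have h2 : (0:ℝ) < 2 := by norm_num
  choose c hcc using fun i => QuotientAddGroup.mk_surjective (u i)
  choose b hbb using fun i => QuotientAddGroup.mk_surjective (v i)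
  set d : Fin n → ℝ := fun i => toIcoMod h2 (b i) (c i) with hd
  have hdm : ∀ i, d i ∈ Set.Ico (b i) (b i + 2) := fun i => toIcoMod_mem_Ico h2 (b i) (c i)
  have hdc : ∀ i, ((d i : ℝ) : AddCircle (2:ℝ)) = u i := by
    intro i
    rw [← hcc i, hd]
    rw [coe_eq_coe_iff', toIcoMod_sub_self]
    exact ⟨_, rfl⟩
  have hne1 : ∀ i, d i ≠ b i + 1 := by
    intro i he
    apply h i
    rw [← hdc i, he, ← hbb i, AddCircle.coe_add]
  rw [Set.not_disjoint_iff]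
  refine ⟨fun i => if d i - b i < 1 then ((d i : ℝ) : AddCircle (2:ℝ))
      else ((b i : ℝ) : AddCircle (2:ℝ)), ?_, ?_⟩
  · intro i
    by_cases hcase : d i - b i < 1
    · refine ⟨0, le_refl _, by norm_num, ?_⟩
      show (if d i - b i < 1 then _ else _) = _
      simp [hcase, ← hdc i]
    · refine ⟨b i + 2 - d i, ?_, ?_, ?_⟩
      · have := (hdm i).2; linarith
      · have h1 : 1 < d i - b i := lt_of_le_of_ne (not_lt.mp hcase) (fun he => hne1 i (by linarith))
        linarith
      · show (if d i - b i < 1 then _ else _) = _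
        rw [if_neg hcase, ← hdc i, ← AddCircle.coe_add, coe_eq_coe_iff']
        exact ⟨-1, by rw [zsmul_eq_mul]; push_cast; ring⟩
  · intro i
    by_cases hcase : d i - b i < 1
    · refine ⟨d i - b i, by have := (hdm i).1; linarith, hcase, ?_⟩
      show (if d i - b i < 1 then _ else _) = _
      rw [if_pos hcase, ← hbb i, ← AddCircle.coe_add]
      norm_num
    · refine ⟨0, le_refl _, by norm_num, ?_⟩
      show (if d i - b i < 1 then _ else _) = _
      simp [hcase, ← hbb i]

/-! ### An explicit one-factorization of `K_{n+1}` for odd `n` -/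

variable (n : ℕ) [NeZero n]

def toV (x : ZMod n) : Fin (n+1) := ⟨x.val, Nat.lt_succ_of_lt (ZMod.val_lt x)⟩

lemma toV_coe (x : ZMod n) : (((toV n x : Fin (n+1)) : ℕ) : ZMod n) = x :=
  ZMod.natCast_rightInverse x

lemma toV_lt (x : ZMod n) : ((toV n x : Fin (n+1)) : ℕ) < n := ZMod.val_lt x

lemma toV_of_lt {j : Fin (n+1)} (hj : (j:ℕ) < n) : toV n ((j:ℕ) : ZMod n) = j := by
  apply Fin.ext
  show ((((j:ℕ) : ZMod n)).val) = (j:ℕ)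
  rw [ZMod.val_natCast, Nat.mod_eq_of_lt hj]

/-- The `i`-th perfect matching of `K_{n+1}`: `∞ ↔ i` and `j ↔ 2i - j (mod n)`. -/
def F (i : Fin n) (j : Fin (n+1)) : Fin (n+1) :=
  if (j : ℕ) = n then toV n ((i:ℕ) : ZMod n)
  else if ((j:ℕ) : ZMod n) = ((i:ℕ) : ZMod n) then Fin.last n
  else toV n (2 * ((i:ℕ) : ZMod n) - ((j:ℕ) : ZMod n))

variable {n}

lemma two_unit (hodd : Odd n) : IsUnit (2 : ZMod n) := by
  have := (ZMod.isUnit_iff_coprime 2 n).mpr (Nat.coprime_two_left.mpr hodd)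
  simpa using this

lemma two_cancel (hodd : Odd n) {a b : ZMod n} (h : 2 * a = 2 * b) : a = b :=
  (two_unit hodd).mul_right_injective h

lemma F_ne (hodd : Odd n) (i : Fin n) (j : Fin (n+1)) : F n i j ≠ j := by
  unfold F
  by_cases h1 : (j:ℕ) = n
  · rw [if_pos h1]
    intro he
    have := toV_lt n ((i:ℕ) : ZMod n)
    rw [he, h1] at this
    omega
  · rw [if_neg h1]
    by_cases h2 : ((j:ℕ) : ZMod n) = ((i:ℕ) : ZMod n)
    · rw [if_pos h2]
      intro he
      exact h1 (by rw [← he]; rfl)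
    · rw [if_neg h2]
      intro he
      apply h2
      apply two_cancel hodd
      have h3 : (((toV n (2 * ((i:ℕ) : ZMod n) - ((j:ℕ) : ZMod n)) : Fin (n+1)) : ℕ) : ZMod n)
          = ((j:ℕ) : ZMod n) := by rw [he]
      rw [toV_coe] at h3
      linear_combination -h3

lemma F_invol (hodd : Odd n) (i : Fin n) : Function.Involutive (F n i) := by
  intro j
  by_cases h1 : (j:ℕ) = n
  · rw [show F n i j = toV n ((i:ℕ) : ZMod n) from if_pos h1]
    unfold F
    rw [if_neg (Nat.ne_of_lt (toV_lt n _)), if_pos (toV_coe n _)]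
    exact Fin.ext (by rw [h1]; rfl)
  · have hj : (j:ℕ) < n := by have := j.isLt; omega
    by_cases h2 : ((j:ℕ) : ZMod n) = ((i:ℕ) : ZMod n)
    · rw [show F n i j = Fin.last n from by unfold F; rw [if_neg h1, if_pos h2]]
      unfold F
      rw [if_pos (show ((Fin.last n : Fin (n+1)) : ℕ) = n from rfl), ← h2, toV_of_lt n hj]
    · rw [show F n i j = toV n (2 * ((i:ℕ) : ZMod n) - ((j:ℕ) : ZMod n)) from by
        unfold F; rw [if_neg h1, if_neg h2]]
      unfold F
      rw [if_neg (Nat.ne_of_lt (toV_lt n _)), toV_coe,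
        if_neg (fun he => h2 (two_cancel hodd (by linear_combination (-2 : ZMod n) * he))),
        show 2 * ((i:ℕ) : ZMod n) - (2 * ((i:ℕ) : ZMod n) - ((j:ℕ) : ZMod n))
          = ((j:ℕ):ZMod n) from by ring]
      exact toV_of_lt n hj

lemma F_cover (hodd : Odd n) (j k : Fin (n+1)) (hjk : j ≠ k) : ∃ i : Fin n, F n i j = k := by
  by_cases h1 : (j:ℕ) = n
  · have hk : (k:ℕ) < n := by
      have h := k.isLt
      rcases Nat.lt_or_ge (k:ℕ) n with h' | h'
      · exact h'
      · exact absurd (Fin.ext (by omega) : j = k) hjk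
    refine ⟨⟨(((k:ℕ) : ZMod n)).val, ZMod.val_lt _⟩, ?_⟩
    unfold F
    rw [if_pos h1]
    show toV n ((((((k:ℕ) : ZMod n)).val : ℕ) : ZMod n)) = k
    rw [ZMod.natCast_rightInverse _]
    exact toV_of_lt n hk
  · have hj : (j:ℕ) < n := by have := j.isLt; omega
    by_cases h2 : (k:ℕ) = n
    · refine ⟨⟨(((j:ℕ) : ZMod n)).val, ZMod.val_lt _⟩, ?_⟩
      unfold F
      rw [if_neg h1,
        if_pos (show _ = ((((((j:ℕ) : ZMod n)).val : ℕ)) : ZMod n) from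
          (ZMod.natCast_rightInverse _).symm)]
      exact Fin.ext (by rw [h2]; rfl)
    · have hk : (k:ℕ) < n := by have := k.isLt; omega
      obtain ⟨w, hw⟩ := two_unit hodd
      set z : ZMod n := ↑w⁻¹ * (((j:ℕ) : ZMod n) + ((k:ℕ) : ZMod n)) with hz
      have h2z : 2 * z = ((j:ℕ) : ZMod n) + ((k:ℕ) : ZMod n) := by
        rw [hz, ← mul_assoc, ← hw, Units.mul_inv, one_mul]
      refine ⟨⟨z.val, ZMod.val_lt _⟩, ?_⟩
      have hiz : (((⟨z.val, ZMod.val_lt _⟩ : Fin n) : ℕ) : ZMod n) = z :=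
        ZMod.natCast_rightInverse _
      unfold F
      rw [if_neg h1, hiz]
      have hne : ((j:ℕ) : ZMod n) ≠ z := by
        intro he
        have h3 : (2:ZMod n) * ((j:ℕ):ZMod n) = 2 * z := by rw [he]
        rw [h2z, two_mul] at h3
        have hjk2 : ((j:ℕ) : ZMod n) = ((k:ℕ) : ZMod n) := add_left_cancel h3
        exact hjk (by rw [← toV_of_lt n hj, ← toV_of_lt n hk, hjk2])
      rw [if_neg hne,
        show 2 * z - ((j:ℕ):ZMod n) = ((k:ℕ):ZMod n) from by rw [h2z]; ring]
      exact toV_of_lt n hk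

/-! ### The real centers -/

variable (n)

/-- The `i`-th real coordinate of the center of the `j`-th cube. -/
noncomputable def rT (i : Fin n) (j : Fin (n+1)) : ℝ :=
  ((min (j:ℕ) ((F n i j : Fin (n+1)) : ℕ) : ℕ) + 1) / ((n:ℝ) + 2)
    + (if (j:ℕ) < ((F n i j : Fin (n+1)) : ℕ) then 0 else 1)

variable {n}

lemma base_bounds (i : Fin n) (j : Fin (n+1)) :
    0 < ((min (j:ℕ) ((F n i j : Fin (n+1)) : ℕ) : ℕ) + 1 : ℝ) / ((n:ℝ) + 2) ∧
    ((min (j:ℕ) ((F n i j : Fin (n+1)) : ℕ) : ℕ) + 1 : ℝ) / ((n:ℝ) + 2) < 1 := by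
  have hden : (0:ℝ) < (n:ℝ) + 2 := by positivity
  constructor
  · positivity
  · rw [div_lt_one hden]
    have h1 : min (j:ℕ) ((F n i j : Fin (n+1)) : ℕ) ≤ n :=
      le_trans (min_le_left _ _) (by have := j.isLt; omega)
    have h2 : ((min (j:ℕ) ((F n i j : Fin (n+1)) : ℕ) : ℕ) : ℝ) ≤ (n:ℝ) := by exact_mod_cast h1
    linarith

lemma rT_bounds (i : Fin n) (j : Fin (n+1)) : 0 < rT n i j ∧ rT n i j < 2 := by
  obtain ⟨h0, h1⟩ := base_bounds i j
  unfold rT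
  by_cases hc : (j:ℕ) < ((F n i j : Fin (n+1)) : ℕ)
  · rw [if_pos hc]; constructor <;> linarith
  · rw [if_neg hc]; constructor <;> linarith

lemma rT_pair (hodd : Odd n) (i : Fin n) (j : Fin (n+1)) :
    rT n i j - rT n i (F n i j) = 1 ∨ rT n i j - rT n i (F n i j) = -1 := by
  have hinv : F n i (F n i j) = j := F_invol hodd i j
  have hne : (j:ℕ) ≠ ((F n i j : Fin (n+1)):ℕ) := fun h => F_ne hodd i j (Fin.ext h.symm)
  unfold rT
  rw [hinv, min_comm ((F n i j : Fin (n+1)):ℕ) (j:ℕ)]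
  rcases Nat.lt_or_ge (j:ℕ) ((F n i j : Fin (n+1)):ℕ) with h | h
  · right; rw [if_pos h, if_neg (by omega)]; ring
  · left
    have h' : ((F n i j : Fin (n+1)):ℕ) < (j:ℕ) := by omega
    rw [if_neg (by omega), if_pos h']; ring

lemma rT_ne (hodd : Odd n) (i : Fin n) {j k : Fin (n+1)} (hjk : j ≠ k) :
    rT n i j ≠ rT n i k := by
  by_cases hek : k = F n i j
  · subst hek
    rcases rT_pair hodd i j with h | h <;> intro he <;> rw [he, sub_self] at h <;> norm_num at h
  · have h1 : (j:ℕ) ≠ (k:ℕ) := fun h => hjk (Fin.ext h)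
    have h2 : (j:ℕ) ≠ ((F n i k : Fin (n+1)):ℕ) := by
      intro h
      apply hek
      rw [Fin.ext h]
      exact (F_invol hodd i k).symm
    have h3 : ((F n i j : Fin (n+1)):ℕ) ≠ (k:ℕ) := fun h => hek (Fin.ext h).symm
    have h4 : ((F n i j : Fin (n+1)):ℕ) ≠ ((F n i k : Fin (n+1)):ℕ) := by
      intro h
      apply hjk
      rw [← F_invol hodd i j, Fin.ext h, F_invol hodd i k]
    have hmin : min (j:ℕ) ((F n i j : Fin (n+1)):ℕ) ≠ min (k:ℕ) ((F n i k : Fin (n+1)):ℕ) := by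
      omega
    have hden : ((n:ℝ) + 2) ≠ 0 := by positivity
    have hb : ((min (j:ℕ) ((F n i j : Fin (n+1)) : ℕ) : ℕ) + 1 : ℝ) / ((n:ℝ) + 2) ≠
        ((min (k:ℕ) ((F n i k : Fin (n+1)) : ℕ) : ℕ) + 1 : ℝ) / ((n:ℝ) + 2) := by
      intro h
      rw [div_eq_div_iff hden hden] at h
      have h' := mul_right_cancel₀ hden h
      have h'' : ((min (j:ℕ) ((F n i j : Fin (n+1)) : ℕ) : ℕ) : ℝ) =
          ((min (k:ℕ) ((F n i k : Fin (n+1)) : ℕ) : ℕ) : ℝ) := by linarith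
      exact hmin (by exact_mod_cast h'')
    obtain ⟨hb10, hb11⟩ := base_bounds i j
    obtain ⟨hb20, hb21⟩ := base_bounds i k
    unfold rT
    by_cases hc1 : (j:ℕ) < ((F n i j : Fin (n+1)) : ℕ) <;>
      by_cases hc2 : (k:ℕ) < ((F n i k : Fin (n+1)) : ℕ) <;>
      simp only [hc1, hc2, if_true, if_false, if_pos, if_neg, not_false_iff] <;>
      intro he <;>
      first
        | exact hb (by linarith)
        | linarith

end CubePack

theorem odd_dim_nonextensible_packing_from_one_factorization
    {n : ℕ} (hodd : Odd n) (hn : 3 ≤ n) :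
    -- the cubes coming from any one-factorization of `K_{n+1}` are pairwise disjoint
    (∀ (F : Fin n → Fin (n + 1) → Fin (n + 1)) (s : Fin n → Fin (n + 1) → Bool)
        (α : Fin n → ℝ),
      (∀ i j, F i j ≠ j) →                                  -- no fixed points
      (∀ i, Function.Involutive (F i)) →                    -- each `F i` is a matching
      (∀ j k, j ≠ k → ∃! i, F i j = k) →                    -- the matchings partition the edges
      (∀ i j, s i j = ! s i (F i j)) →                      -- `s i` picks a side of `F i`
      (∀ i, 0 < α i ∧ α i < 1) →
      ∀ j k : Fin (n + 1), j ≠ k →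
        Disjoint
          (cubeC (fun i => ((if s i j then α i else α i + 1 : ℝ) : AddCircle (2 : ℝ))))
          (cubeC (fun i => ((if s i k then α i else α i + 1 : ℝ) : AddCircle (2 : ℝ))))) ∧
    -- and for suitable choices one obtains a non-extensible packing with `n + 1` cubes
    (∃ t : Fin (n + 1) → Fin n → AddCircle (2 : ℝ),
      Function.Injective t ∧
      (∀ j k : Fin (n + 1), j ≠ k → Disjoint (cubeC (t j)) (cubeC (t k))) ∧
      (∀ u : Fin n → AddCircle (2 : ℝ), ∃ j, ¬ Disjoint (cubeC u) (cubeC (t j)))) := by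
  haveI : NeZero n := ⟨by omega⟩
  constructor
  · -- first bullet
    intro F s α hFne hFinv hFuniq hside hα j k hjk
    obtain ⟨i, hi, -⟩ := hFuniq j k hjk
    have hs : s i j = ! s i k := by rw [← hi]; exact hside i j
    apply CubePack.cube_disjoint
    refine ⟨i, ?_⟩
    show (↑(if s i j then α i else α i + 1) : AddCircle (2:ℝ))
      = ↑(if s i k then α i else α i + 1) + ((1:ℝ) : AddCircle (2:ℝ))
    rcases Bool.eq_false_or_eq_true (s i j) with hsj | hsj
    · have hsk : s i k = false := by rw [hsj] at hs; simpa using hs.symm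
      rw [if_pos hsj, if_neg (by simp [hsk]), ← AddCircle.coe_add,
        show α i + 1 + 1 = α i + 2 from by ring, AddCircle.coe_add_period]
    · have hsk : s i k = true := by rw [hsj] at hs; simpa using hs.symm
      rw [if_neg (by simp [hsj]), if_pos hsk, ← AddCircle.coe_add]
  · -- second bullet
    refine ⟨fun j i => ((CubePack.rT n i j : ℝ) : AddCircle (2:ℝ)), ?_, ?_, ?_⟩
    · -- injective
      intro j k h
      by_contra hjk
      have hne := CubePack.rT_ne hodd (⟨0, by omega⟩ : Fin n) hjk
      exact hne (CubePack.coe_inj_Ioo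
        (CubePack.rT_bounds _ j).1 (CubePack.rT_bounds _ j).2
        (CubePack.rT_bounds _ k).1 (CubePack.rT_bounds _ k).2
        (congrFun h ⟨0, by omega⟩))
    · -- pairwise disjoint
      intro j k hjk
      obtain ⟨i, hi⟩ := CubePack.F_cover hodd j k hjk
      apply CubePack.cube_disjoint
      refine ⟨i, ?_⟩
      rw [← AddCircle.coe_add, CubePack.coe_eq_coe_iff']
      rcases hi ▸ CubePack.rT_pair hodd i j with h | h
      · exact ⟨0, by rw [zsmul_eq_mul]; push_cast; linarith⟩
      · exact ⟨-1, by rw [zsmul_eq_mul]; push_cast; linarith⟩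
    · -- non-extensible
      intro u
      by_contra hc
      push_neg at hc
      have hblock : ∀ j, ∃ i, u i = ((CubePack.rT n i j : ℝ) : AddCircle (2:ℝ))
          + ((1:ℝ) : AddCircle (2:ℝ)) := by
        intro j
        by_contra h'
        push_neg at h'
        exact CubePack.cube_intersect h' (hc j)
      choose g hg using hblock
      obtain ⟨j, k, hjk, hgjk⟩ := Fintype.exists_ne_map_eq_of_card_lt g (by simp)
      have he : ((CubePack.rT n (g j) j : ℝ) : AddCircle (2:ℝ))
          = ((CubePack.rT n (g j) k : ℝ) : AddCircle (2:ℝ)) := by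
        have h1 := hg j
        have h2 := hg k
        rw [← hgjk] at h2
        exact add_right_cancel (h1.symm.trans h2)
      exact CubePack.rT_ne hodd (g j) hjk
        (CubePack.coe_inj_Ioo
          (CubePack.rT_bounds _ j).1 (CubePack.rT_bounds _ j).2
          (CubePack.rT_bounds _ k).1 (CubePack.rT_bounds _ k).2 he)
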